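/- Let p > 1 be an odd integer, and for a non-negative integer n let P(n) be the number of finitely supported functions a : {2^k p^ℓ : k, ℓ ∈ ℕ} → {0, 1} with Σ_{k,ℓ} a(2^k p^ℓ)·2^k p^ℓ = n (so P(0) = 1). Then for every positive integer n, P(n) = P(n−1) + P(n/p) if p divides n, and P(n) = P(n−1) otherwise. -/

import Mathlib

open Set

noncomputable section

/-- The number of double-base representations of `n` with bases `2` and `p` and
digits `{0, 1}`. -/
def doubleBaseP (p n : ℕ) : ℕ :=
  ({a : ℕ →₀ ℕ | (∀ h, a h ≠ 0 → ∃ k l : ℕ, h = 2 ^ k * p ^ l) ∧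
      (∀ h, a h ≤ 1) ∧ (a.sum fun h c => c * h) = n}).ncard

namespace DBPAux

open Finset

/-- Set-of-finsets version of the counting problem. -/
def G (p n : ℕ) : Set (Finset ℕ) :=
  {s | (∀ h ∈ s, ∃ k l : ℕ, h = 2 ^ k * p ^ l) ∧ ∑ h ∈ s, h = n}

lemma mem_le {p n : ℕ} {s : Finset ℕ} (hs : s ∈ G p n) {h : ℕ} (hh : h ∈ s) : h ≤ n := by
  have := Finset.single_le_sum (f := fun x : ℕ => x) (fun i _ => Nat.zero_le i) hh
  simpa [hs.2] using this

/-- `doubleBaseP` counts the finsets in `G`. -/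
lemma doubleBaseP_eq (p n : ℕ) : doubleBaseP p n = (G p n).ncard := by
  classical
  set S : Set (ℕ →₀ ℕ) :=
    {a : ℕ →₀ ℕ | (∀ h, a h ≠ 0 → ∃ k l : ℕ, h = 2 ^ k * p ^ l) ∧
      (∀ h, a h ≤ 1) ∧ (a.sum fun h c => c * h) = n} with hS
  have hinj : Set.InjOn Finsupp.support S := by
    intro a ha b hb hab
    ext h
    by_cases hh : h ∈ a.support
    · have h1 := Finsupp.mem_support_iff.mp hh
      have h2 := Finsupp.mem_support_iff.mp (hab ▸ hh)
      have := ha.2.1 h; have := hb.2.1 h; omega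
    · have h1 := Finsupp.notMem_support_iff.mp hh
      have h2 := Finsupp.notMem_support_iff.mp (by rw [← hab]; exact hh)
      omega
  have himg : Finsupp.support '' S = G p n := by
    ext s
    constructor
    · rintro ⟨a, ⟨hform, hle, hsum⟩, rfl⟩
      refine ⟨fun h hh => hform h (Finsupp.mem_support_iff.mp hh), ?_⟩
      rw [← hsum, Finsupp.sum]
      apply Finset.sum_congr rfl
      intro h hh
      have h1 : a h ≠ 0 := Finsupp.mem_support_iff.mp hh
      have h2 := hle h
      have : a h = 1 := by omega
      rw [this, one_mul]
    · rintro ⟨hform, hsum⟩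
      refine ⟨⟨s, fun h => if h ∈ s then 1 else 0, ?_⟩, ⟨?_, ?_, ?_⟩, rfl⟩
      · intro h; simp
      · intro h hh
        simp only [Finsupp.coe_mk] at hh
        by_cases h' : h ∈ s
        · exact hform h h'
        · simp [h'] at hh
      · intro h
        simp only [Finsupp.coe_mk]
        split <;> omega
      · rw [Finsupp.sum]
        simp only [Finsupp.coe_mk]
        rw [← hsum]
        apply Finset.sum_congr rfl
        intro h hh
        simp [hh]
  rw [doubleBaseP, ← hS, ← himg, Set.ncard_image_of_injOn hinj]

lemma G_finite (p n : ℕ) : (G p n).Finite := by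
  apply Set.Finite.subset (Finset.finite_toSet ((Finset.range (n+1)).powerset))
  intro s hs
  simp only [Finset.coe_powerset, Set.mem_preimage, Set.mem_powerset_iff, Finset.coe_subset,
    Finset.mem_coe, Finset.mem_powerset]
  intro h hh
  have := mem_le hs hh
  simp only [Finset.mem_range]
  omega

lemma two_pow_sum (j : ℕ) : ∑ i ∈ Finset.range j, 2 ^ i = 2 ^ j - 1 := by
  induction j with
  | zero => simp
  | succ j ih =>
    rw [Finset.sum_range_succ, ih]
    have := Nat.one_le_two_pow (n := j)
    rw [pow_succ]
    omega

open Classical in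
/-- The binary "add one with carry" operation on a finset. -/
def carryUp (s : Finset ℕ) : Finset ℕ :=
  if h : ∃ j, (2 : ℕ) ^ j ∉ s then
    insert (2 ^ Nat.find h) (s \ (Finset.range (Nat.find h)).image (2 ^ ·))
  else s

open Classical in
/-- The binary "subtract one with borrow" operation on a finset. -/
def carryDown (t : Finset ℕ) : Finset ℕ :=
  if h : ∃ j, (2 : ℕ) ^ j ∈ t then
    (t.erase (2 ^ Nat.find h)) ∪ (Finset.range (Nat.find h)).image (2 ^ ·)
  else t

lemma pow_inj : Function.Injective fun k : ℕ => 2 ^ k := Nat.pow_right_injective le_rfl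

lemma carryUp_spec (s : Finset ℕ) (h : ∃ j, (2 : ℕ) ^ j ∉ s) :
    (∑ x ∈ carryUp s, x = ∑ x ∈ s, x + 1) ∧
    (∀ x ∈ carryUp s, x ∈ s ∨ ∃ k, x = 2 ^ k) ∧
    ((2 : ℕ) ^ Nat.find h ∈ carryUp s) ∧ (∀ i < Nat.find h, (2 : ℕ) ^ i ∉ carryUp s) ∧
    carryDown (carryUp s) = s := by
  classical
  set j := Nat.find h with hj
  have hjs : (2 : ℕ) ^ j ∉ s := Nat.find_spec h
  have hlt : ∀ i < j, (2 : ℕ) ^ i ∈ s := by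
    intro i hi
    have := Nat.find_min h hi
    simpa using this
  set I : Finset ℕ := (Finset.range j).image (2 ^ ·) with hI
  have hIs : I ⊆ s := by
    intro x hx
    simp only [hI, Finset.mem_image, Finset.mem_range] at hx
    obtain ⟨i, hi, rfl⟩ := hx
    exact hlt i hi
  have hjI : (2 : ℕ) ^ j ∉ I := by
    simp only [hI, Finset.mem_image, Finset.mem_range]
    rintro ⟨i, hi, hie⟩
    have := pow_inj hie
    omega
  have hjsd : (2 : ℕ) ^ j ∉ s \ I := fun hx => hjs (Finset.mem_sdiff.mp hx).1
  have hcu : carryUp s = insert (2 ^ j) (s \ I) := by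
    rw [carryUp, dif_pos h]
  have hsumI : ∑ x ∈ I, x = 2 ^ j - 1 := by
    rw [hI, Finset.sum_image (fun a _ b _ hab => pow_inj hab)]
    exact two_pow_sum j
  have hsd : ∑ x ∈ s \ I, x + (2 ^ j - 1) = ∑ x ∈ s, x := by
    rw [← hsumI]; exact Finset.sum_sdiff hIs
  have hpos := Nat.one_le_two_pow (n := j)
  refine ⟨?_, ?_, ?_, ?_, ?_⟩
  · rw [hcu, Finset.sum_insert hjsd]; omega
  · intro x hx
    rw [hcu, Finset.mem_insert] at hx
    rcases hx with rfl | hx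
    · exact Or.inr ⟨j, rfl⟩
    · exact Or.inl (Finset.mem_sdiff.mp hx).1
  · rw [hcu]; exact Finset.mem_insert_self _ _
  · intro i hi
    rw [hcu, Finset.mem_insert]
    rintro (hie | hx)
    · have := pow_inj hie; omega
    · exact (Finset.mem_sdiff.mp hx).2 (by
        simp only [hI, Finset.mem_image, Finset.mem_range]
        exact ⟨i, hi, rfl⟩)
  · have hex : ∃ i, (2 : ℕ) ^ i ∈ carryUp s := ⟨j, by rw [hcu]; exact Finset.mem_insert_self _ _⟩
    rw [carryDown, dif_pos hex]
    have hfind : Nat.find hex = j := by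
      rw [Nat.find_eq_iff]
      refine ⟨by rw [hcu]; exact Finset.mem_insert_self _ _, ?_⟩
      intro i hi hmem
      rw [hcu, Finset.mem_insert] at hmem
      rcases hmem with hie | hx
      · have := pow_inj hie; omega
      · exact (Finset.mem_sdiff.mp hx).2 (by
          simp only [hI, Finset.mem_image, Finset.mem_range]
          exact ⟨i, hi, rfl⟩)
    rw [hfind, hcu, Finset.erase_insert hjsd]
    exact Finset.sdiff_union_of_subset hIs

lemma carryDown_spec (t : Finset ℕ) (h : ∃ j, (2 : ℕ) ^ j ∈ t) :
    (∑ x ∈ carryDown t, x + 1 = ∑ x ∈ t, x) ∧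
    (∀ x ∈ carryDown t, x ∈ t ∨ ∃ k, x = 2 ^ k) ∧
    (∃ j, (2 : ℕ) ^ j ∉ carryDown t) ∧
    carryUp (carryDown t) = t := by
  classical
  set j := Nat.find h with hj
  have hjt : (2 : ℕ) ^ j ∈ t := Nat.find_spec h
  have hlt : ∀ i < j, (2 : ℕ) ^ i ∉ t := fun i hi => Nat.find_min h hi
  set I : Finset ℕ := (Finset.range j).image (2 ^ ·) with hI
  have hIe : Disjoint I (t.erase (2 ^ j)) := by
    rw [Finset.disjoint_left]
    intro x hx
    simp only [hI, Finset.mem_image, Finset.mem_range] at hx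
    obtain ⟨i, hi, rfl⟩ := hx
    intro hmem
    exact hlt i hi (Finset.mem_of_mem_erase hmem)
  have hcd : carryDown t = (t.erase (2 ^ j)) ∪ I := by
    rw [carryDown, dif_pos h]
  have hsumI : ∑ x ∈ I, x = 2 ^ j - 1 := by
    rw [hI, Finset.sum_image (fun a _ b _ hab => pow_inj hab)]
    exact two_pow_sum j
  have hse : ∑ x ∈ t.erase (2 ^ j), x + 2 ^ j = ∑ x ∈ t, x :=
    Finset.sum_erase_add t _ hjt
  have hpos := Nat.one_le_two_pow (n := j)
  have hjcd : (2 : ℕ) ^ j ∉ carryDown t := by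
    rw [hcd, Finset.mem_union]
    rintro (hx | hx)
    · exact (Finset.ne_of_mem_erase hx) rfl
    · simp only [hI, Finset.mem_image, Finset.mem_range] at hx
      obtain ⟨i, hi, hie⟩ := hx
      have := pow_inj hie; omega
  have hltcd : ∀ i < j, (2 : ℕ) ^ i ∈ carryDown t := by
    intro i hi
    rw [hcd, Finset.mem_union]
    right
    simp only [hI, Finset.mem_image, Finset.mem_range]
    exact ⟨i, hi, rfl⟩
  refine ⟨?_, ?_, ⟨j, hjcd⟩, ?_⟩
  · rw [hcd, Finset.sum_union hIe.symm, hsumI]; omega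
  · intro x hx
    rw [hcd, Finset.mem_union] at hx
    rcases hx with hx | hx
    · exact Or.inl (Finset.mem_of_mem_erase hx)
    · simp only [hI, Finset.mem_image, Finset.mem_range] at hx
      obtain ⟨i, _, rfl⟩ := hx
      exact Or.inr ⟨i, rfl⟩
  · have hex : ∃ i, (2 : ℕ) ^ i ∉ carryDown t := ⟨j, hjcd⟩
    rw [carryUp, dif_pos hex]
    have hfind : Nat.find hex = j := by
      rw [Nat.find_eq_iff]
      exact ⟨hjcd, fun i hi hni => hni (hltcd i hi)⟩
    rw [hfind, hcd]
    have : (t.erase (2 ^ j) ∪ I) \ I = t.erase (2 ^ j) := by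
      rw [Finset.union_sdiff_right]
      exact Finset.sdiff_eq_self_of_disjoint hIe.symm
    rw [this, Finset.insert_erase hjt]

/-- Representations containing a pure power of 2. -/
def GA (p n : ℕ) : Set (Finset ℕ) := {t ∈ G p n | ∃ j, (2 : ℕ) ^ j ∈ t}

/-- Representations containing no pure power of 2. -/
def GB (p n : ℕ) : Set (Finset ℕ) := {t ∈ G p n | ∀ j, (2 : ℕ) ^ j ∉ t}

lemma exists_notMem {p n : ℕ} {s : Finset ℕ} (hs : s ∈ G p n) : ∃ j, (2 : ℕ) ^ j ∉ s := by
  refine ⟨n, fun hmem => ?_⟩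
  have h1 := mem_le hs hmem
  have h2 := Nat.lt_two_pow_self (n := n)
  omega

lemma GA_card (p : ℕ) (n : ℕ) (hn : 0 < n) : (GA p n).ncard = (G p (n - 1)).ncard := by
  classical
  have hinj : Set.InjOn carryUp (G p (n - 1)) := by
    intro a ha b hb hab
    have h1 := (carryUp_spec a (exists_notMem ha)).2.2.2.2
    have h2 := (carryUp_spec b (exists_notMem hb)).2.2.2.2
    rw [← h1, ← h2, hab]
  have himg : carryUp '' (G p (n - 1)) = GA p n := by
    ext t
    constructor
    · rintro ⟨s, hs, rfl⟩
      have hspec := carryUp_spec s (exists_notMem hs)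
      refine ⟨⟨?_, ?_⟩, ?_⟩
      · intro x hx
        rcases hspec.2.1 x hx with hx' | ⟨k, rfl⟩
        · exact hs.1 x hx'
        · exact ⟨k, 0, by ring⟩
      · rw [hspec.1, hs.2]; omega
      · exact ⟨_, hspec.2.2.1⟩
    · rintro ⟨ht, hex⟩
      have hspec := carryDown_spec t hex
      refine ⟨carryDown t, ⟨?_, ?_⟩, hspec.2.2.2⟩
      · intro x hx
        rcases hspec.2.1 x hx with hx' | ⟨k, rfl⟩
        · exact ht.1 x hx'
        · exact ⟨k, 0, by ring⟩
      · have := hspec.1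
        rw [ht.2] at this
        omega
  rw [← himg, Set.ncard_image_of_injOn hinj]

lemma GB_dvd {p n : ℕ} (hp : 1 < p) (hodd : Odd p) {t : Finset ℕ} (ht : t ∈ GB p n) :
    ∀ x ∈ t, p ∣ x := by
  intro x hx
  obtain ⟨k, l, rfl⟩ := ht.1.1 x hx
  rcases Nat.eq_zero_or_pos l with rfl | hl
  · exfalso
    exact ht.2 k (by simpa using hx)
  · exact Dvd.dvd.mul_left (dvd_pow_self p (by omega : l ≠ 0)) _

lemma GB_card_dvd (p : ℕ) (hp : 1 < p) (hodd : Odd p) (n : ℕ) (hdvd : p ∣ n) :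
    (GB p n).ncard = (G p (n / p)).ncard := by
  classical
  have hp0 : p ≠ 0 := by omega
  have hcop : ∀ m : ℕ, ¬ (p ∣ 2 ^ m) := by
    intro m hm
    have h2 : Nat.Coprime p 2 :=
      Nat.coprime_comm.mp ((Nat.prime_two.coprime_iff_not_dvd).mpr (by
        rw [Nat.dvd_iff_mod_eq_zero]
        have := Nat.odd_iff.mp hodd
        omega))
    have := Nat.Coprime.eq_one_of_dvd (h2.pow_right m) hm
    omega
  have hinj : Set.InjOn (Finset.image (p * ·)) (G p (n / p)) := by
    intro a _ b _ hab
    exact Finset.image_injective (fun x y hxy =>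
      Nat.eq_of_mul_eq_mul_left (by omega) hxy) hab
  have himg : (Finset.image (p * ·)) '' (G p (n / p)) = GB p n := by
    ext t
    constructor
    · rintro ⟨s, hs, rfl⟩
      have hsum : ∑ x ∈ s.image (p * ·), x = n := by
        rw [Finset.sum_image (fun x _ y _ hxy => Nat.eq_of_mul_eq_mul_left (by omega) hxy),
          ← Finset.mul_sum, hs.2, Nat.mul_div_cancel' hdvd]
      refine ⟨⟨?_, hsum⟩, ?_⟩
      · intro x hx
        simp only [Finset.mem_image] at hx
        obtain ⟨y, hy, rfl⟩ := hx
        obtain ⟨k, l, rfl⟩ := hs.1 y hy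
        exact ⟨k, l + 1, by ring⟩
      · intro j hj
        simp only [Finset.mem_image] at hj
        obtain ⟨y, _, hy⟩ := hj
        exact hcop j ⟨y, hy.symm⟩
    · rintro ⟨ht, hnp⟩
      have hdvdall : ∀ x ∈ t, p ∣ x := GB_dvd hp hodd ⟨ht, hnp⟩
      have hinj2 : ∀ x ∈ t, ∀ y ∈ t, x / p = y / p → x = y := by
        intro x hx y hy hxy
        have h1 := Nat.div_mul_cancel (hdvdall x hx)
        have h2 := Nat.div_mul_cancel (hdvdall y hy)
        rw [← h1, ← h2, hxy]
      refine ⟨t.image (· / p), ⟨?_, ?_⟩, ?_⟩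
      · intro x hx
        simp only [Finset.mem_image] at hx
        obtain ⟨y, hy, rfl⟩ := hx
        obtain ⟨k, l, hkl⟩ := ht.1 y hy
        rcases Nat.eq_zero_or_pos l with rfl | hl
        · exact absurd (hkl ▸ hy) (by simpa using hnp k)
        · obtain ⟨l', rfl⟩ := Nat.exists_eq_succ_of_ne_zero (by omega : l ≠ 0)
          refine ⟨k, l', ?_⟩
          rw [hkl, pow_succ]
          rw [show 2 ^ k * (p ^ l' * p) = p * (2 ^ k * p ^ l') by ring,
            Nat.mul_div_cancel_left _ (by omega)]
      · have : p * ∑ x ∈ t.image (· / p), x = n := by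
          rw [Finset.mul_sum, Finset.sum_image hinj2]
          rw [← ht.2]
          apply Finset.sum_congr rfl
          intro x hx
          exact Nat.mul_div_cancel' (hdvdall x hx)
        rw [← this, Nat.mul_div_cancel_left _ (by omega : 0 < p)]
      · rw [Finset.image_image]
        have : ∀ x ∈ t, (p * ·) ((· / p) x) = id x := by
          intro x hx
          simp only [id, Function.comp]
          exact Nat.mul_div_cancel' (hdvdall x hx)
        calc t.image ((p * ·) ∘ (· / p)) = t.image id := Finset.image_congr (fun x hx => this x hx)
          _ = t := Finset.image_id
  rw [← himg, Set.ncard_image_of_injOn hinj]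

lemma GB_empty (p : ℕ) (hp : 1 < p) (hodd : Odd p) (n : ℕ) (hndvd : ¬ p ∣ n) :
    GB p n = ∅ := by
  ext t
  simp only [Set.mem_empty_iff_false, iff_false]
  rintro ⟨ht, hnp⟩
  apply hndvd
  rw [← ht.2]
  exact Finset.dvd_sum (GB_dvd hp hodd ⟨ht, hnp⟩)

lemma G_split (p n : ℕ) : (G p n).ncard = (GA p n).ncard + (GB p n).ncard := by
  classical
  have hsub : G p n = GA p n ∪ GB p n := by
    ext t
    constructor
    · intro ht
      by_cases hex : ∃ j, (2 : ℕ) ^ j ∈ t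
      · exact Or.inl ⟨ht, hex⟩
      · exact Or.inr ⟨ht, by push_neg at hex; exact hex⟩
    · rintro (h | h) <;> exact h.1
  have hdisj : Disjoint (GA p n) (GB p n) := by
    rw [Set.disjoint_left]
    rintro t ⟨_, j, hj⟩ ⟨_, hall⟩
    exact hall j hj
  have hfinA : (GA p n).Finite := (G_finite p n).subset (fun t ht => ht.1)
  have hfinB : (GB p n).Finite := (G_finite p n).subset (fun t ht => ht.1)
  rw [hsub, Set.ncard_union_eq hdisj hfinA hfinB]

end DBPAux

theorem doubleBaseP_recurrence (p : ℕ) (hp : 1 < p) (hodd : Odd p)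
    (n : ℕ) (hn : 0 < n) :
    (p ∣ n → doubleBaseP p n = doubleBaseP p (n - 1) + doubleBaseP p (n / p)) ∧
    (¬ p ∣ n → doubleBaseP p n = doubleBaseP p (n - 1)) := by
  rw [DBPAux.doubleBaseP_eq, DBPAux.doubleBaseP_eq, DBPAux.doubleBaseP_eq,
    DBPAux.G_split p n, DBPAux.GA_card p n hn]
  constructor
  · intro hdvd
    rw [DBPAux.GB_card_dvd p hp hodd n hdvd]
  · intro hndvd
    rw [DBPAux.GB_empty p hp hodd n hndvd]
    simp

end
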